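/- arXiv:1610.04349 — 2 statements merged into one kernel-verified Lean document; each statement's English description precedes it below -/
import Mathlib

section
/- In the square-bit (2-dimensional gbit) state space [0,1]² with branch measurement Z given by the first coordinate and complementary measurement X by the second, the X-flip map T(z,x) = (z, 1−x) is a phase operation with respect to Z (it preserves all Z statistics), but it is not branch-local to either branch: there exists a state s with Z-coordinate 0 (no support on branch Z=1) such that T s ≠ s, and likewise for Z-coordinate 1. Hence the only transformation in the phase group {id, X-flip} localizable to either branch is the identity. -/
/-- Square-bit states: pairs (P(Z=+1), P(X=+1)) ∈ [0,1]². -/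
def SquareBit : Set (ℝ × ℝ) := Set.Icc (0 : ℝ) 1 ×ˢ Set.Icc (0 : ℝ) 1

/-- The X-flip transformation on the square bit. -/
def Xflip : ℝ × ℝ → ℝ × ℝ := fun s => (s.1, 1 - s.2)

/-- The X-flip is a phase operation for Z on the square bit, but is not branch-local
to either branch; hence the only phase-group element localizable to a branch is the
identity. -/
theorem squarebit_no_local_phase :
    (∀ s ∈ SquareBit, (Xflip s).1 = s.1) ∧
    (∃ s ∈ SquareBit, s.1 = 0 ∧ Xflip s ≠ s) ∧
    (∃ s ∈ SquareBit, s.1 = 1 ∧ Xflip s ≠ s) ∧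
    (∀ T ∈ ({id, Xflip} : Set (ℝ × ℝ → ℝ × ℝ)),
      ((∀ s ∈ SquareBit, s.1 = 0 → T s = s) ∨ (∀ s ∈ SquareBit, s.1 = 1 → T s = s)) →
        T = id) := by
  refine ⟨fun s _ => rfl, ⟨(0, 0), ?_, rfl, ?_⟩, ⟨(1, 0), ?_, rfl, ?_⟩, ?_⟩
  · constructor <;> constructor <;> norm_num
  · simp [Xflip, Prod.ext_iff]
  · constructor <;> constructor <;> norm_num
  · simp [Xflip, Prod.ext_iff]
  · rintro T (rfl | rfl) h
    · rfl
    · exfalso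
      rcases h with h | h
      · have := h (0, 0) (by constructor <;> constructor <;> norm_num) rfl
        simp [Xflip, Prod.ext_iff] at this
      · have := h (1, 0) (by constructor <;> constructor <;> norm_num) rfl
        simp [Xflip, Prod.ext_iff] at this
end

section
/- For the distributed 1-bit Deutsch computation on Spekkens ontic states without the epistemic restriction: with agent encodings g(b) ∈ {id,(1 2)} for the upper branch and h(b) ∈ {id,(3 4)} for the lower branch (g(0)=h(0)=id, g(1)=(1 2), h(1)=(3 4)), and initial epistemic state {1,3}, the image set is {1,3} or {2,4} when f(0)=f(1) (constant), and {1,4} or {2,3} when f(0)≠f(1) (balanced); consequently no single two-element subset E ⊆ {1,2,3,4} satisfies E ⊇ image when f is constant and E ∩ image = ∅ when f is balanced, for all four functions f. -/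
open Equiv

/-- Distributed 1-bit Deutsch computation on Spekkens ontic states without the epistemic
restriction: with encodings g(0)=id, g(1)=(0 1) on the upper branch and h(0)=id,
h(1)=(2 3) on the lower branch, and initial epistemic state {0,2}, the image is
{0,2} or {1,3} for constant f and {0,3} or {1,2} for balanced f; and no two-element
effect E contains the image for every constant f while being disjoint from it for every
balanced f. -/
theorem spekkens_ontic_deutsch_fails :
    let g : Fin 2 → Equiv.Perm (Fin 4) := fun b => if b = 1 then Equiv.swap 0 1 else 1
    let h : Fin 2 → Equiv.Perm (Fin 4) := fun b => if b = 1 then Equiv.swap 2 3 else 1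
    let out : (Fin 2 → Fin 2) → Finset (Fin 4) :=
      fun f => Finset.image (g (f 0) * h (f 1)) {0, 2}
    (∀ f : Fin 2 → Fin 2,
      (f 0 = f 1 → out f = {0, 2} ∨ out f = {1, 3}) ∧
      (f 0 ≠ f 1 → out f = {0, 3} ∨ out f = {1, 2})) ∧
    ¬ ∃ E : Finset (Fin 4), E.card = 2 ∧ ∀ f : Fin 2 → Fin 2,
        (f 0 = f 1 → out f ⊆ E) ∧ (f 0 ≠ f 1 → Disjoint E (out f)) := by
  intro g h out
  have key : ∀ f : Fin 2 → Fin 2,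
      (f 0 = 0 ∧ f 1 = 0 → out f = {0, 2}) ∧
      (f 0 = 1 ∧ f 1 = 1 → out f = {1, 3}) ∧
      (f 0 = 0 ∧ f 1 = 1 → out f = {0, 3}) ∧
      (f 0 = 1 ∧ f 1 = 0 → out f = {1, 2}) := by
    intro f
    refine ⟨fun ⟨h0, h1⟩ => ?_, fun ⟨h0, h1⟩ => ?_, fun ⟨h0, h1⟩ => ?_, fun ⟨h0, h1⟩ => ?_⟩ <;>
      simp only [out, g, h, h0, h1] <;> decide
  constructor
  · intro f
    obtain ⟨k1, k2, k3, k4⟩ := key f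
    have h0 : f 0 = 0 ∨ f 0 = 1 := by omega
    have h1 : f 1 = 0 ∨ f 1 = 1 := by omega
    rcases h0 with h0 | h0 <;> rcases h1 with h1 | h1 <;>
      constructor <;> intro hf <;> simp_all
  · rintro ⟨E, hcard, hE⟩
    have e1 : out (fun _ => 0) ⊆ E := (hE (fun _ => 0)).1 rfl
    have e2 : out (fun _ => 1) ⊆ E := (hE (fun _ => 1)).1 rfl
    rw [(key (fun _ => 0)).1 ⟨rfl, rfl⟩] at e1
    rw [(key (fun _ => 1)).2.1 ⟨rfl, rfl⟩] at e2
    have : ({0, 1, 2, 3} : Finset (Fin 4)) ⊆ E := by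
      intro x hx
      fin_cases hx
      · exact e1 (by decide)
      · exact e2 (by decide)
      · exact e1 (by decide)
      · exact e2 (by decide)
    have := Finset.card_le_card this
    simp at this
    omega
end
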